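/- For the arithmetic progression a, a+d, …, a+sd with gcd(a,d) = 1, a ≥ 2, d ≥ 1 and 1 ≤ s < a, writing q = ⌈(a−1)/s⌉, the second Sylvester sum satisfies 12·S₂ = −s((a+sd)(2a+sd) + a²)·q⁴ + (4a³ + 2(3s−2)a² + 2sd(3s−2)a + 2s²d²(s−1))·q³ + (6(d−1)a³ + 3(2 − s − 2d)a² − 3sd(s−2)a − sd²(s² − 3s + 1))·q² + (2(2d−1)(d−1)a³ − (6d² − 6d + 2)a² + 2d(d−s)a + s(1−s)d²)·q + ad(a−1)(d−1)(ad − a − d). -/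

import Mathlib

open Finset

private lemma sum_range_quad (α β γ : ℚ) : ∀ m : ℕ,
    ∑ t ∈ range m, (α + β * t + γ * (t:ℚ)^2)
      = m * α + β * (m*(m-1)/2) + γ * (m*(m-1)*(2*m-1)/6)
  | 0 => by simp
  | (m+1) => by
      rw [Finset.sum_range_succ, sum_range_quad α β γ m]
      push_cast
      ring

private def FF (a x m : ℚ) : ℚ :=
  m * x^2 + a * x * m * (m-1) + a^2 * m * (m-1) * (2*m-1)/6

private lemma sum_sq_closed (x α : ℚ) (m : ℕ) :
    ∑ t ∈ range m, (x + α * t)^2 = FF α x m := by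
  have h : ∀ t ∈ range m, (x + α*(t:ℚ))^2 = x^2 + (2*x*α)*t + α^2*(t:ℚ)^2 := by
    intro t _; ring
  rw [Finset.sum_congr rfl h, sum_range_quad]
  unfold FF; ring

private def ccN (s Y : ℕ) : ℕ := (Y + s - 1) / s

private def GG (a d s N c : ℚ) : ℚ :=
  ((1 : ℚ)/6) * d^2 * N * c + ((1 : ℚ)/2) * d^2 * N^2 * c + ((1 : ℚ)/3) * d^2 * N^3 * c + ((1 : ℚ)/12) * d^2 * s * c + ((-1 : ℚ)/12) * d^2 * s * c^2 + ((-1 : ℚ)/12) * d^2 * s^2 * c + ((1 : ℚ)/4) * d^2 * s^2 * c^2 + ((-1 : ℚ)/6) * d^2 * s^2 * c^3 + ((-1 : ℚ)/12) * d^2 * s^3 * c^2 + ((1 : ℚ)/6) * d^2 * s^3 * c^3 + ((-1 : ℚ)/12) * d^2 * s^3 * c^4 + ((-1 : ℚ)/2) * a * d * N * c + ((1 : ℚ)/2) * a * d * N * c^2 + ((-1 : ℚ)/2) * a * d * N^2 * c + ((1 : ℚ)/2) * a * d * N^2 * c^2 + ((-1 : ℚ)/6) * a * d * s * c + ((1 :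 ℚ)/2) * a * d * s * c^2 + ((-1 : ℚ)/3) * a * d * s * c^3 + ((-1 : ℚ)/4) * a * d * s^2 * c^2 + ((1 : ℚ)/2) * a * d * s^2 * c^3 + ((-1 : ℚ)/4) * a * d * s^2 * c^4 + ((1 : ℚ)/6) * a^2 * N * c + ((-1 : ℚ)/2) * a^2 * N * c^2 + ((1 : ℚ)/3) * a^2 * N * c^3 + ((-1 : ℚ)/4) * a^2 * s * c^2 + ((1 : ℚ)/2) * a^2 * s * c^3 + ((-1 : ℚ)/4) * a^2 * s * c^4

private lemma partA (a d s : ℕ) (hs : 1 ≤ s) : ∀ N : ℕ,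
    ∑ Y ∈ Finset.Ico 1 (N+1), FF a (d*Y) (ccN s Y) = GG a d s N (ccN s N) := by
  intro N
  induction N with
  | zero =>
      have h0 : ccN s 0 = 0 := by unfold ccN; exact Nat.div_eq_of_lt (by omega)
      simp [h0, GG]
  | succ N ih =>
      rw [Finset.sum_Ico_succ_top (by omega : 1 ≤ N+1), ih]
      by_cases hdvd : s ∣ N
      · obtain ⟨m0, rfl⟩ := hdvd
        have h1 : ccN s (s*m0) = m0 := by
          unfold ccN
          have e : s*m0 + s - 1 = s*m0 + (s-1) := by omega
          rw [e, Nat.mul_add_div (by omega), Nat.div_eq_of_lt (by omega), Nat.add_zero]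
        have h2 : ccN s (s*m0 + 1) = m0 + 1 := by
          unfold ccN
          have e : s*m0 + 1 + s - 1 = s*(m0+1) := by
            have : s*(m0+1) = s*m0 + s := by ring
            omega
          rw [e, Nat.mul_div_cancel_left _ (by omega : 0 < s)]
        rw [h1, h2]
        unfold GG FF
        push_cast
        ring
      · have hN1 : 1 ≤ N := by
          rcases Nat.eq_zero_or_pos N with h|h
          · exact absurd (h ▸ dvd_zero s) hdvd
          · exact h
        have h2 : ccN s (N+1) = ccN s N := by
          obtain ⟨n, rfl⟩ : ∃ n, N = n + 1 := ⟨N-1, by omega⟩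
          unfold ccN
          have e1 : n + 1 + 1 + s - 1 = (n+1) + s := by omega
          have e2 : n + 1 + s - 1 = n + s := by omega
          rw [e1, e2, Nat.add_div_right _ (by omega), Nat.add_div_right _ (by omega),
            Nat.succ_div_of_not_dvd hdvd]
        rw [h2]
        unfold GG FF
        push_cast
        ring

private lemma rep_iff (a d s n : ℕ) (hs : 1 ≤ s) :
    (∃ x : Fin (s + 1) → ℕ, n = ∑ i : Fin (s + 1), (a + (i : ℕ) * d) * x i) ↔
    (∃ X Y : ℕ, Y ≤ s * X ∧ n = a * X + d * Y) := by
  constructor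
  · rintro ⟨x, rfl⟩
    refine ⟨∑ i, x i, ∑ i : Fin (s+1), (i : ℕ) * x i, ?_, ?_⟩
    · calc ∑ i : Fin (s+1), (i : ℕ) * x i ≤ ∑ i : Fin (s+1), s * x i := by
            apply Finset.sum_le_sum
            intro i _
            exact Nat.mul_le_mul_right _ (Nat.lt_succ_iff.mp i.isLt)
        _ = s * ∑ i, x i := by rw [Finset.mul_sum]
    · rw [Finset.mul_sum, Finset.mul_sum, ← Finset.sum_add_distrib]
      apply Finset.sum_congr rfl
      intro i _
      ring
  · rintro ⟨X, Y, hY, rfl⟩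
    have hsd := Nat.div_add_mod Y s
    set k := Y / s with hk
    set u := Y % s with hu
    have hus : u < s := Nat.mod_lt _ (by omega)
    set ε : ℕ := if u = 0 then 0 else 1 with hε
    have hkε : k + ε ≤ X := by
      rcases Nat.eq_zero_or_pos u with h0 | h0
      · have hε0 : ε = 0 := by rw [hε, if_pos h0]
        have h1 : s * k ≤ s * X := by omega
        have := Nat.le_of_mul_le_mul_left h1 (by omega : 0 < s)
        omega
      · have : s * k < s * X := by omega
        have hkX : k < X := Nat.lt_of_mul_lt_mul_left this
        have : ε = 1 := by rw [hε, if_neg (by omega)]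
        omega
    set x : Fin (s+1) → ℕ := fun i =>
      (if i = Fin.last s then k else 0) + (if i = ⟨u, by omega⟩ then ε else 0)
        + (if i = 0 then X - k - ε else 0) with hx
    refine ⟨x, ?_⟩
    have hsum : ∑ i : Fin (s+1), (a + (i : ℕ) * d) * x i
        = (a + s * d) * k + (a + u * d) * ε + a * (X - k - ε) := by
      simp only [hx, Nat.mul_add, Finset.sum_add_distrib, mul_ite, Nat.mul_zero,
        Finset.sum_ite_eq', Finset.mem_univ, if_true]
      simp [Fin.val_last]
    rw [hsum]
    obtain ⟨z, hz⟩ : ∃ z, X = k + ε + z := ⟨X - k - ε, by omega⟩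
    have hXz : X - k - ε = z := by omega
    rw [hXz, hz]
    rcases Nat.eq_zero_or_pos u with h0 | h0
    · have hε0 : ε = 0 := by rw [hε, if_pos h0]
      have hY : Y = s * k := by omega
      rw [hε0, hY]
      ring
    · have hεn : ε = 1 := by rw [hε, if_neg (by omega)]
      have hY : Y = s * k + u := by omega
      rw [hεn, hY]
      ring

private lemma ccN_le {s Y X : ℕ} (hs : 1 ≤ s) (h : Y ≤ s * X) : ccN s Y ≤ X := by
  unfold ccN
  calc (Y + s - 1) / s ≤ (s * X + (s - 1)) / s :=
        Nat.div_le_div_right (by omega)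
    _ = X + (s-1)/s := Nat.mul_add_div (by omega) _ _
    _ = X := by rw [Nat.div_eq_of_lt (by omega), Nat.add_zero]

private lemma le_s_ccN {s Y : ℕ} (hs : 1 ≤ s) : Y ≤ s * ccN s Y := by
  unfold ccN
  have h1 := Nat.div_add_mod (Y + s - 1) s
  have h2 : (Y + s - 1) % s < s := Nat.mod_lt _ (by omega)
  omega

private lemma ccN_mono {s Y Y' : ℕ} (h : Y ≤ Y') : ccN s Y ≤ ccN s Y' :=
  Nat.div_le_div_right (by omega)

private lemma r_pos {a d Y : ℕ} (ha : 2 ≤ a) (had : Nat.Coprime a d)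
    (h1 : 1 ≤ Y) (h2 : Y < a) : 1 ≤ d * Y % a := by
  rcases Nat.eq_zero_or_pos (d * Y % a) with h0 | h0
  · exfalso
    have hdvd : a ∣ d * Y := Nat.dvd_of_mod_eq_zero h0
    have : a ∣ Y := had.dvd_of_dvd_mul_left hdvd
    have := Nat.le_of_dvd (by omega) this
    omega
  · exact h0

private lemma NR_eq (a d s : ℕ) (ha : 2 ≤ a) (hd : 1 ≤ d) (hs : 1 ≤ s)
    (had : Nat.Coprime a d) (NR : Finset ℕ)
    (hNR : ∀ n : ℕ, n ∈ NR ↔ 0 < n ∧ ¬∃ X Y : ℕ, Y ≤ s * X ∧ n = a * X + d * Y) :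
    NR = (Finset.Ico 1 a).biUnion
      (fun Y => (Finset.range (ccN s Y + d * Y / a)).image (fun t => d * Y % a + a * t)) := by
  ext n
  rw [hNR]
  simp only [Finset.mem_biUnion, Finset.mem_Ico, Finset.mem_image, Finset.mem_range]
  constructor
  · rintro ⟨hn, hnrep⟩
    set φ := Nat.totient a with hφdef
    have hφ : 1 ≤ φ := Nat.totient_pos.mpr (by omega)
    set Y := (d ^ (φ - 1) * n) % a with hY
    have hmod : d * Y ≡ n [MOD a] := by
      calc d * Y ≡ d * (d ^ (φ - 1) * n) [MOD a] := (Nat.mod_modEq _ a).mul_left d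
        _ = d ^ φ * n := by
            rw [← Nat.mul_assoc]
            congr 1
            rw [← pow_succ']
            congr 1
            omega
        _ ≡ 1 * n [MOD a] := (Nat.ModEq.pow_totient had.symm).mul_right n
        _ = n := Nat.one_mul n
    have hYlt : Y < a := Nat.mod_lt _ (by omega)
    have hY1 : 1 ≤ Y := by
      rcases Nat.eq_zero_or_pos Y with h0 | h0
      · exfalso
        apply hnrep
        have : n % a = 0 := by
          have := hmod
          rw [h0, Nat.mul_zero] at this
          unfold Nat.ModEq at this
          simpa using this.symm
        have hdvd : a ∣ n := Nat.dvd_of_mod_eq_zero this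
        exact ⟨n / a, 0, Nat.zero_le _,
          by rw [Nat.mul_zero, Nat.add_zero, Nat.mul_div_cancel' hdvd]⟩
      · exact h0
    have hr : n % a = d * Y % a := hmod.symm
    have hae := Nat.div_add_mod (d * Y) a
    have hnd := Nat.div_add_mod n a
    refine ⟨Y, ⟨hY1, hYlt⟩, n / a, ?_, ?_⟩
    · by_contra hge
      push_neg at hge
      apply hnrep
      obtain ⟨w, hw⟩ : ∃ w, n / a = d * Y / a + w := ⟨n / a - d * Y / a, by omega⟩
      have hccw : ccN s Y ≤ w := by omega
      refine ⟨w, Y, le_trans (le_s_ccN hs) (Nat.mul_le_mul (le_refl s) hccw), ?_⟩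
      have : n = a * (n / a) + d * Y % a := by omega
      rw [this, hw, Nat.mul_add]
      have : a * (d * Y / a) + d * Y % a = d * Y := hae
      omega
    · omega
  · rintro ⟨Y, ⟨hY1, hYlt⟩, t, ht, hteq⟩
    have hae := Nat.div_add_mod (d * Y) a
    have hrpos := r_pos ha had hY1 hYlt
    refine ⟨by omega, ?_⟩
    rintro ⟨X, Y', hY', hn⟩
    have hmod : d * Y' ≡ d * Y [MOD a] := by
      have h1 : (d * Y % a + a * t) % a = d * Y % a % a := by
        rw [Nat.mul_comm a t]
        exact Nat.add_mul_mod_self_right _ _ _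
      have h2 : (a * X + d * Y') % a = d * Y' % a := by
        rw [Nat.mul_comm a X, Nat.add_comm (X * a)]
        exact Nat.add_mul_mod_self_right _ _ _
      unfold Nat.ModEq
      rw [← h2, ← hn, ← hteq, h1, Nat.mod_mod_of_dvd _ (dvd_refl a)]
    have hYY' : Y ≤ Y' := by
      have hgcd : Nat.gcd a d = 1 := had
      have hc : Y' ≡ Y [MOD a] := Nat.ModEq.cancel_left_of_coprime hgcd hmod
      have : Y' % a = Y % a := hc
      have hYm : Y % a = Y := Nat.mod_eq_of_lt hYlt
      have := Nat.div_add_mod Y' a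
      omega
    have hccX : ccN s Y ≤ X := le_trans (ccN_mono hYY') (ccN_le hs hY')
    have h1 : a * (ccN s Y + d * Y / a) + d * Y % a ≤ n :=
      calc a * (ccN s Y + d * Y / a) + d * Y % a
          = a * ccN s Y + (a * (d * Y / a) + d * Y % a) := by ring
        _ = a * ccN s Y + d * Y := by rw [hae]
        _ ≤ a * X + d * Y' := Nat.add_le_add (Nat.mul_le_mul (le_refl a) hccX)
              (Nat.mul_le_mul (le_refl d) hYY')
        _ = n := hn.symm
    have h2 : n < a * (ccN s Y + d * Y / a) + d * Y % a := by
      have hlt : a * t < a * (ccN s Y + d * Y / a) :=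
        mul_lt_mul_of_pos_left ht (by omega)
      omega
    exact absurd h1 (Nat.not_le.mpr h2)

private lemma sum_Ico1_quad (α β γ : ℚ) (m : ℕ) (hm : 1 ≤ m) :
    ∑ x ∈ Finset.Ico 1 m, (α + β * x + γ * (x:ℚ)^2)
      = (m-1) * α + β * (m*(m-1)/2) + γ * (m*(m-1)*(2*m-1)/6) := by
  have h0 := sum_range_quad α β γ m
  rw [Finset.range_eq_Ico, Finset.sum_eq_sum_Ico_succ_bot (by omega : 0 < m)] at h0
  push_cast at h0 ⊢
  linear_combination h0

-- the rectangle sum closed form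
private lemma sumR (a d : ℕ) (ha : 2 ≤ a) (hd : 1 ≤ d) :
    ∑ p ∈ Finset.Ico 1 d ×ˢ Finset.Ico 1 a, ((a:ℚ)*d - a*p.1 - d*p.2)^2
      = (((d:ℚ))-1) * (((1 : ℚ)/6) * a * (d:ℚ)^2 + ((-1 : ℚ)/2) * (a:ℚ)^2 * (d:ℚ)^2 + ((1 : ℚ)/3) * (a:ℚ)^3 * (d:ℚ)^2)
        + ((1 : ℚ) * (a:ℚ)^2 * d + (-1 : ℚ) * (a:ℚ)^3 * d) * ((d:ℚ)*((d:ℚ)-1)/2)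
        + ((-1 : ℚ) * (a:ℚ)^2 + (1 : ℚ) * (a:ℚ)^3) * ((d:ℚ)*((d:ℚ)-1)*(2*(d:ℚ)-1)/6) := by
  rw [Finset.sum_product]
  have hinner : ∀ x : ℕ, ∑ y ∈ Finset.Ico 1 a, ((a:ℚ)*d - a*x - d*y)^2
      = (((1 : ℚ)/6) * a * (d:ℚ)^2 + ((-1 : ℚ)/2) * (a:ℚ)^2 * (d:ℚ)^2 + ((1 : ℚ)/3) * (a:ℚ)^3 * (d:ℚ)^2)
        + ((1 : ℚ) * (a:ℚ)^2 * d + (-1 : ℚ) * (a:ℚ)^3 * d) * x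
        + ((-1 : ℚ) * (a:ℚ)^2 + (1 : ℚ) * (a:ℚ)^3) * (x:ℚ)^2 := by
    intro x
    have hc : ∀ y ∈ Finset.Ico 1 a, ((a:ℚ)*d - a*x - d*y)^2
        = (((a:ℚ)*d - a*x)^2 + (-2*d*((a:ℚ)*d - a*x)) * y + ((d:ℚ)^2) * (y:ℚ)^2) := by
      intro y _; ring
    rw [Finset.sum_congr rfl hc, sum_Ico1_quad _ _ _ a (by omega)]
    ring
  rw [Finset.sum_congr rfl (fun x _ => hinner x), sum_Ico1_quad _ _ _ d (by omega)]

-- doubling: sum over rectangle = 2 * sum over strict triangle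
private lemma doubling (a d : ℕ) (ha : 2 ≤ a) (hd : 1 ≤ d) (had : Nat.Coprime a d) :
    ∑ p ∈ Finset.Ico 1 d ×ˢ Finset.Ico 1 a, ((a:ℚ)*d - a*p.1 - d*p.2)^2
      = 2 * ∑ p ∈ (Finset.Ico 1 d ×ˢ Finset.Ico 1 a).filter
          (fun p => a * p.1 + d * p.2 < a * d), ((a:ℚ)*d - a*p.1 - d*p.2)^2 := by
  have hne : ∀ p : ℕ × ℕ, p ∈ Finset.Ico 1 d ×ˢ Finset.Ico 1 a →
      a * p.1 + d * p.2 ≠ a * d := by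
    rintro ⟨x, y⟩ hp heq
    simp only [Finset.mem_product, Finset.mem_Ico] at hp
    obtain ⟨⟨hx1, hxd⟩, ⟨hy1, hya⟩⟩ := hp
    have heq' : a * x + d * y = a * d := heq
    have hdy : d * y = a * (d - x) := by
      obtain ⟨w, hw⟩ : ∃ w, d = x + w := ⟨d - x, by omega⟩
      have h1 : a * d = a * x + a * w := by rw [hw]; ring
      have h2 : d - x = w := by omega
      rw [h2]; omega
    have : a ∣ y := had.dvd_of_dvd_mul_left ⟨d - x, hdy⟩
    have := Nat.le_of_dvd (by omega) this
    omega
  rw [two_mul]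
  nth_rewrite 1 [← Finset.sum_filter_add_sum_filter_not
    (Finset.Ico 1 d ×ˢ Finset.Ico 1 a) (fun p => a * p.1 + d * p.2 < a * d)]
  congr 1
  apply Finset.sum_nbij' (fun p => (d - p.1, a - p.2)) (fun p => (d - p.1, a - p.2))
  · rintro ⟨x, y⟩ hp
    simp only [Finset.mem_filter, Finset.mem_product, Finset.mem_Ico] at hp ⊢
    obtain ⟨⟨⟨hx1, hxd⟩, ⟨hy1, hya⟩⟩, hcond⟩ := hp
    have hgt : a * x + d * y > a * d :=
      lt_of_le_of_ne (by omega) (Ne.symm (hne ⟨x, y⟩ (by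
        simp only [Finset.mem_product, Finset.mem_Ico]; omega)))
    refine ⟨⟨⟨by omega, by omega⟩, ⟨by omega, by omega⟩⟩, ?_⟩
    obtain ⟨w, hw⟩ : ∃ w, d = x + w := ⟨d - x, by omega⟩
    obtain ⟨z, hz⟩ : ∃ z, a = y + z := ⟨a - y, by omega⟩
    have h1 : d - x = w := by omega
    have h2 : a - y = z := by omega
    rw [h1, h2]
    have e1 : a * d = a * x + a * w := by rw [hw]; ring
    have e2 : a * d = d * y + d * z := by rw [hz]; ring
    omega
  · rintro ⟨x, y⟩ hp
    simp only [Finset.mem_filter, Finset.mem_product, Finset.mem_Ico, not_lt] at hp ⊢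
    obtain ⟨⟨⟨hx1, hxd⟩, ⟨hy1, hya⟩⟩, hcond⟩ := hp
    refine ⟨⟨⟨by omega, by omega⟩, ⟨by omega, by omega⟩⟩, ?_⟩
    obtain ⟨w, hw⟩ : ∃ w, d = x + w := ⟨d - x, by omega⟩
    obtain ⟨z, hz⟩ : ∃ z, a = y + z := ⟨a - y, by omega⟩
    have h1 : d - x = w := by omega
    have h2 : a - y = z := by omega
    rw [h1, h2]
    have e1 : a * d = a * x + a * w := by rw [hw]; ring
    have e2 : a * d = d * y + d * z := by rw [hz]; ring
    omega
  · rintro ⟨x, y⟩ hp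
    simp only [Finset.mem_filter, Finset.mem_product, Finset.mem_Ico, not_lt] at hp
    have : d - (d - x) = x := by omega
    have h2 : a - (a - y) = y := by omega
    simp only [this, h2]
  · rintro ⟨x, y⟩ hp
    simp only [Finset.mem_filter, Finset.mem_product, Finset.mem_Ico] at hp
    have : d - (d - x) = x := by omega
    have h2 : a - (a - y) = y := by omega
    simp only [this, h2]
  · rintro ⟨x, y⟩ hp
    simp only [Finset.mem_filter, Finset.mem_product, Finset.mem_Ico, not_lt] at hp
    obtain ⟨⟨⟨hx1, hxd⟩, ⟨hy1, hya⟩⟩, hcond⟩ := hp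
    have h1 : ((d - x : ℕ) : ℚ) = (d:ℚ) - x := by
      push_cast [Nat.cast_sub (by omega : x ≤ d)]; ring
    have h2 : ((a - y : ℕ) : ℚ) = (a:ℚ) - y := by
      push_cast [Nat.cast_sub (by omega : y ≤ a)]; ring
    simp only [h1, h2]
    ring

private lemma tri_le (a d : ℕ) (ha : 2 ≤ a) {x y : ℕ}
    (hx1 : 1 ≤ x) (hy1 : 1 ≤ y) (hya : y < a)
    (hcond : a * x + d * y < a * d) : x ≤ d * (a - y) / a := by
  obtain ⟨z, hz⟩ : ∃ z, a = y + z := ⟨a - y, by omega⟩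
  have h2 : a - y = z := by omega
  rw [h2]
  have e2 : a * d = d * y + d * z := by rw [hz]; ring
  have hax : a * x < d * z := by omega
  have hae := Nat.div_add_mod (d * z) a
  have hmod : d * z % a < a := Nat.mod_lt _ (by omega)
  have : a * x < a * (d * z / a + 1) := by
    have e3 : a * (d * z / a + 1) = a * (d * z / a) + a := by ring
    omega
  have := Nat.lt_of_mul_lt_mul_left this
  omega

private lemma sigma_to_tri (a d : ℕ) (ha : 2 ≤ a) (hd : 1 ≤ d)
    (had : Nat.Coprime a d) :
    ∑ p ∈ (Finset.Ico 1 a).sigma (fun Y => Finset.range (d * Y / a)),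
        (((d * p.1 % a : ℕ) : ℚ) + (a:ℚ) * p.2)^2
      = ∑ p ∈ (Finset.Ico 1 d ×ˢ Finset.Ico 1 a).filter
          (fun p => a * p.1 + d * p.2 < a * d), ((a:ℚ)*d - a*p.1 - d*p.2)^2 := by
  apply Finset.sum_nbij' (fun p => (d * p.1 / a - p.2, a - p.1))
    (fun p => ⟨a - p.2, d * (a - p.2) / a - p.1⟩)
  · rintro ⟨Y, t⟩ hp
    simp only [Finset.mem_sigma, Finset.mem_Ico, Finset.mem_range] at hp
    obtain ⟨⟨hY1, hYa⟩, ht⟩ := hp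
    simp only [Finset.mem_filter, Finset.mem_product, Finset.mem_Ico]
    have hed : d * Y / a < d := by
      rw [Nat.div_lt_iff_lt_mul (by omega : 0 < a)]
      exact mul_lt_mul_of_pos_left hYa (by omega : (0:ℕ) < d)
    have hae := Nat.div_add_mod (d * Y) a
    have hr := r_pos ha had hY1 hYa
    refine ⟨⟨⟨by omega, by omega⟩, ⟨by omega, by omega⟩⟩, ?_⟩
    obtain ⟨w, hw⟩ : ∃ w, d * Y / a = t + w := ⟨d * Y / a - t, by omega⟩
    have h1 : d * Y / a - t = w := by omega
    obtain ⟨z, hz⟩ : ∃ z, a = Y + z := ⟨a - Y, by omega⟩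
    have h2 : a - Y = z := by omega
    rw [h1, h2]
    have e1 : a * d = d * Y + d * z := by rw [hz]; ring
    have e3 : a * (d * Y / a) = a * t + a * w := by rw [hw]; ring
    omega
  · rintro ⟨x, y⟩ hp
    simp only [Finset.mem_filter, Finset.mem_product, Finset.mem_Ico] at hp
    obtain ⟨⟨⟨hx1, hxd⟩, ⟨hy1, hya⟩⟩, hcond⟩ := hp
    simp only [Finset.mem_sigma, Finset.mem_Ico, Finset.mem_range]
    have hxe := tri_le a d ha hx1 hy1 hya hcond
    exact ⟨⟨by omega, by omega⟩, by omega⟩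
  · rintro ⟨Y, t⟩ hp
    simp only [Finset.mem_sigma, Finset.mem_Ico, Finset.mem_range] at hp
    obtain ⟨⟨hY1, hYa⟩, ht⟩ := hp
    have h1 : a - (a - Y) = Y := by omega
    have h2 : d * Y / a - (d * Y / a - t) = t := by omega
    simp only [h1, h2]
  · rintro ⟨x, y⟩ hp
    simp only [Finset.mem_filter, Finset.mem_product, Finset.mem_Ico] at hp
    obtain ⟨⟨⟨hx1, hxd⟩, ⟨hy1, hya⟩⟩, hcond⟩ := hp
    have hxe := tri_le a d ha hx1 hy1 hya hcond
    have h1 : a - (a - y) = y := by omega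
    simp only [h1]
    have h2 : d * (a - y) / a - (d * (a - y) / a - x) = x := by omega
    rw [h2]
  · rintro ⟨Y, t⟩ hp
    simp only [Finset.mem_sigma, Finset.mem_Ico, Finset.mem_range] at hp
    obtain ⟨⟨hY1, hYa⟩, ht⟩ := hp
    have hae := Nat.div_add_mod (d * Y) a
    have haeQ : (a:ℚ) * (d * Y / a : ℕ) + ((d * Y % a : ℕ) : ℚ) = (d:ℚ) * Y := by
      exact_mod_cast congrArg (Nat.cast (R := ℚ)) hae
    have hc1 : ((d * Y / a - t : ℕ) : ℚ) = ((d * Y / a : ℕ) : ℚ) - t := by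
      push_cast [Nat.cast_sub (by omega : t ≤ d * Y / a)]; ring
    have hc2 : ((a - Y : ℕ) : ℚ) = (a:ℚ) - Y := by
      push_cast [Nat.cast_sub (by omega : Y ≤ a)]; ring
    simp only [hc1, hc2]
    have hAB : ((d * Y % a : ℕ) : ℚ) + (a:ℚ) * t
        = (a:ℚ)*d - a*(((d * Y / a : ℕ) : ℚ) - t) - d*((a:ℚ) - Y) := by
      linear_combination haeQ
    rw [hAB]

private lemma ceil_eq (a s : ℕ) (ha : 2 ≤ a) (hs : 1 ≤ s) :
    (⌈((a : ℚ) - 1) / (s : ℚ)⌉ : ℚ) = ((ccN s (a-1) : ℕ) : ℚ) := by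
  set c := ccN s (a-1) with hc
  have hup : a - 1 ≤ s * c := le_s_ccN hs
  have hlo : s * c ≤ (a-1) + s - 1 := by
    have h1 : (a - 1 + s - 1) / s * s ≤ a - 1 + s - 1 := Nat.div_mul_le_self _ s
    have h2 : s * c = (a - 1 + s - 1) / s * s := by rw [hc]; unfold ccN; ring
    omega
  have hceil : ⌈((a:ℚ)-1)/(s:ℚ)⌉ = (c : ℤ) := by
    rw [Int.ceil_eq_iff]
    have hupQ : (a:ℚ) - 1 ≤ (s:ℚ) * c := by
      have : ((a - 1 : ℕ) : ℚ) ≤ ((s * c : ℕ) : ℚ) := by exact_mod_cast hup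
      push_cast [Nat.cast_sub (by omega : 1 ≤ a)] at this
      linarith
    have hloQ : (s:ℚ) * c ≤ (a:ℚ) + s - 2 := by
      have : ((s * c : ℕ) : ℚ) ≤ ((a - 1 + s - 1 : ℕ) : ℚ) := by exact_mod_cast hlo
      have he : ((a - 1 + s - 1 : ℕ) : ℚ) = (a:ℚ) + s - 2 := by
        have : a - 1 + s - 1 = a + s - 2 := by omega
        rw [this]
        push_cast [Nat.cast_sub (by omega : 2 ≤ a + s)]
        ring
      rw [he] at this
      push_cast at this ⊢
      linarith
    constructor
    · rw [lt_div_iff₀ (by positivity : (0:ℚ) < s)]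
      push_cast
      linarith
    · rw [div_le_iff₀ (by positivity : (0:ℚ) < s)]
      push_cast
      linarith
  rw [hceil]
  push_cast
  ring

theorem sylvester_S2_arithmetic_progression
    (a d s : ℕ) (ha : 2 ≤ a) (hd : 1 ≤ d) (hs : 1 ≤ s) (hsa : s < a)
    (had : Nat.Coprime a d)
    (NR : Finset ℕ)
    (hNR : ∀ n : ℕ, n ∈ NR ↔ 0 < n ∧
      ¬ ∃ x : Fin (s + 1) → ℕ, n = ∑ i : Fin (s + 1), (a + (i : ℕ) * d) * x i)
    (q : ℚ) (hq : q = (⌈((a : ℚ) - 1) / (s : ℚ)⌉ : ℚ)) :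
    12 * ∑ n ∈ NR, (n : ℚ) ^ 2 =
      -(s : ℚ) * (((a : ℚ) + (s : ℚ) * (d : ℚ)) * (2 * (a : ℚ) + (s : ℚ) * (d : ℚ))
          + (a : ℚ) ^ 2) * q ^ 4
      + (4 * (a : ℚ) ^ 3 + 2 * (3 * (s : ℚ) - 2) * (a : ℚ) ^ 2
          + 2 * (s : ℚ) * (d : ℚ) * (3 * (s : ℚ) - 2) * (a : ℚ)
          + 2 * (s : ℚ) ^ 2 * (d : ℚ) ^ 2 * ((s : ℚ) - 1)) * q ^ 3
      + (6 * ((d : ℚ) - 1) * (a : ℚ) ^ 3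
          + 3 * (2 - (s : ℚ) - 2 * (d : ℚ)) * (a : ℚ) ^ 2
          - 3 * (s : ℚ) * (d : ℚ) * ((s : ℚ) - 2) * (a : ℚ)
          - (s : ℚ) * (d : ℚ) ^ 2 * ((s : ℚ) ^ 2 - 3 * (s : ℚ) + 1)) * q ^ 2
      + (2 * (2 * (d : ℚ) - 1) * ((d : ℚ) - 1) * (a : ℚ) ^ 3
          - (6 * (d : ℚ) ^ 2 - 6 * (d : ℚ) + 2) * (a : ℚ) ^ 2
          + 2 * (d : ℚ) * ((d : ℚ) - (s : ℚ)) * (a : ℚ)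
          + (s : ℚ) * (1 - (s : ℚ)) * (d : ℚ) ^ 2) * q
      + (a : ℚ) * (d : ℚ) * ((a : ℚ) - 1) * ((d : ℚ) - 1)
          * ((a : ℚ) * (d : ℚ) - (a : ℚ) - (d : ℚ)) := by
  -- characterization of NR
  have hNR2 : ∀ n : ℕ, n ∈ NR ↔ 0 < n ∧ ¬∃ X Y : ℕ, Y ≤ s * X ∧ n = a * X + d * Y := by
    intro n
    rw [hNR n, rep_iff a d s n hs]
  have hset := NR_eq a d s ha hd hs had NR hNR2
  -- disjointness
  have hdisj : (↑(Finset.Ico 1 a) : Set ℕ).PairwiseDisjoint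
      (fun Y => (Finset.range (ccN s Y + d * Y / a)).image (fun t => d * Y % a + a * t)) := by
    intro Y hY Y' hY' hne
    simp only [Function.onFun]
    rw [Finset.disjoint_left]
    intro n hn hn'
    simp only [Finset.mem_image, Finset.mem_range] at hn hn'
    obtain ⟨t, ht, hteq⟩ := hn
    obtain ⟨t', ht', hteq'⟩ := hn'
    simp only [Finset.mem_coe, Finset.mem_Ico] at hY hY'
    have hm1 : n % a = d * Y % a := by
      rw [← hteq, Nat.mul_comm a t, Nat.add_mul_mod_self_right,
        Nat.mod_mod_of_dvd _ (dvd_refl a)]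
    have hm2 : n % a = d * Y' % a := by
      rw [← hteq', Nat.mul_comm a t', Nat.add_mul_mod_self_right,
        Nat.mod_mod_of_dvd _ (dvd_refl a)]
    have hmod : d * Y ≡ d * Y' [MOD a] := by
      unfold Nat.ModEq
      omega
    have hgcd : Nat.gcd a d = 1 := had
    have hc : Y ≡ Y' [MOD a] := Nat.ModEq.cancel_left_of_coprime hgcd hmod
    have : Y % a = Y' % a := hc
    rw [Nat.mod_eq_of_lt hY.2, Nat.mod_eq_of_lt hY'.2] at this
    exact hne this
  -- reduce to double sum
  have hsum1 : ∑ n ∈ NR, (n:ℚ)^2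
      = ∑ Y ∈ Finset.Ico 1 a, ∑ t ∈ Finset.range (ccN s Y + d * Y / a),
          (((d * Y % a + a * t : ℕ)):ℚ)^2 := by
    rw [hset, Finset.sum_biUnion hdisj]
    refine Finset.sum_congr rfl fun Y _ => ?_
    rw [Finset.sum_image]
    intro x _ y _ h
    have : a * x = a * y := by simp only at h; omega
    exact Nat.eq_of_mul_eq_mul_left (by omega) this
  -- split each inner sum
  have hsum2 : ∀ Y ∈ Finset.Ico 1 a,
      ∑ t ∈ Finset.range (ccN s Y + d * Y / a), (((d * Y % a + a * t : ℕ)):ℚ)^2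
        = FF a (d*Y) (ccN s Y) + FF a ((d * Y % a : ℕ)) ((d * Y / a : ℕ)) := by
    intro Y _
    have hstep : ∑ t ∈ Finset.range (ccN s Y + d * Y / a), (((d * Y % a + a * t : ℕ)):ℚ)^2
        = ∑ t ∈ Finset.range (ccN s Y + d * Y / a),
            (((d * Y % a : ℕ):ℚ) + (a:ℚ) * t)^2 := by
      refine Finset.sum_congr rfl fun t _ => ?_
      push_cast
      ring
    rw [hstep, sum_sq_closed]
    have haeQ : (a:ℚ) * ((d * Y / a : ℕ):ℚ) + ((d * Y % a : ℕ):ℚ) = (d:ℚ) * Y := by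
      exact_mod_cast congrArg (Nat.cast (R := ℚ)) (Nat.div_add_mod (d * Y) a)
    have hrQ : ((d * Y % a : ℕ):ℚ) = (d:ℚ) * Y - (a:ℚ) * ((d * Y / a : ℕ):ℚ) := by
      linarith
    rw [hrQ]
    unfold FF
    push_cast
    ring
  have hsplit : ∑ n ∈ NR, (n:ℚ)^2
      = (∑ Y ∈ Finset.Ico 1 a, FF a (d*Y) (ccN s Y))
        + ∑ Y ∈ Finset.Ico 1 a, FF a ((d * Y % a : ℕ)) ((d * Y / a : ℕ)) := by
    rw [hsum1, Finset.sum_congr rfl hsum2, Finset.sum_add_distrib]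
  -- Part A
  have hA : ∑ Y ∈ Finset.Ico 1 a, FF a (d*Y) (ccN s Y)
      = GG a d s ((a-1 : ℕ)) ((ccN s (a-1) : ℕ)) := by
    have h := partA a d s hs (a-1)
    have h1 : a - 1 + 1 = a := by omega
    rwa [h1] at h
  -- Part B
  have hB : ∑ Y ∈ Finset.Ico 1 a, FF a ((d * Y % a : ℕ)) ((d * Y / a : ℕ))
      = ∑ p ∈ (Finset.Ico 1 d ×ˢ Finset.Ico 1 a).filter
          (fun p => a * p.1 + d * p.2 < a * d), ((a:ℚ)*d - a*p.1 - d*p.2)^2 := by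
    have h1 : ∀ Y ∈ Finset.Ico 1 a, FF (a:ℚ) ((d * Y % a : ℕ)) ((d * Y / a : ℕ))
        = ∑ t ∈ Finset.range (d * Y / a), (((d * Y % a : ℕ):ℚ) + (a:ℚ) * t)^2 :=
      fun Y _ => (sum_sq_closed _ _ _).symm
    rw [Finset.sum_congr rfl h1, Finset.sum_sigma']
    exact sigma_to_tri a d ha hd had
  have h2B : 2 * ∑ p ∈ (Finset.Ico 1 d ×ˢ Finset.Ico 1 a).filter
          (fun p => a * p.1 + d * p.2 < a * d), ((a:ℚ)*d - a*p.1 - d*p.2)^2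
      = (((d:ℚ))-1) * (((1 : ℚ)/6) * a * (d:ℚ)^2 + ((-1 : ℚ)/2) * (a:ℚ)^2 * (d:ℚ)^2
            + ((1 : ℚ)/3) * (a:ℚ)^3 * (d:ℚ)^2)
        + ((1 : ℚ) * (a:ℚ)^2 * d + (-1 : ℚ) * (a:ℚ)^3 * d) * ((d:ℚ)*((d:ℚ)-1)/2)
        + ((-1 : ℚ) * (a:ℚ)^2 + (1 : ℚ) * (a:ℚ)^3) * ((d:ℚ)*((d:ℚ)-1)*(2*(d:ℚ)-1)/6) := by
    rw [← doubling a d ha hd had]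
    exact sumR a d ha hd
  have hcast1 : ((a - 1 : ℕ) : ℚ) = (a:ℚ) - 1 := by
    push_cast [Nat.cast_sub (by omega : 1 ≤ a)]
    ring
  have hq' : q = ((ccN s (a-1) : ℕ) : ℚ) := by rw [hq, ceil_eq a s ha hs]
  rw [hsplit, hA, hB, hq', hcast1]
  unfold GG
  linear_combination (6:ℚ) * h2B
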